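/- Let h be a finite-dimensional complex Lie algebra whose derived algebra [h,h] has dimension at most 1. Then h is isomorphic either to an Abelian Lie algebra, or to b₂ ⊕ A (b₂ the two-dimensional non-Abelian Lie algebra, A Abelian), or to h_{2n+1} ⊕ A (h_{2n+1} the (2n+1)-dimensional Heisenberg algebra, A Abelian). -/

import Mathlib

/-! Model Lie algebras: `b₂ ⊕ ℂᵐ` realised on `ℂ × ℂ × (Fin m → ℂ)` with
`[(a₁,b₁,u₁),(a₂,b₂,u₂)] = (0, a₁b₂ - a₂b₁, 0)`, and the Heisenberg algebra plus an
abelian part, `h_{2n+1} ⊕ ℂᵐ`, realised on `(Fin n → ℂ) × (Fin n → ℂ) × ℂ × (Fin m → ℂ)`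
with `[(p,q,z,u),(p',q',z',u')] = (0, 0, Σᵢ pᵢq'ᵢ - p'ᵢqᵢ, 0)`. -/

noncomputable instance b2aLieRing (m : ℕ) : LieRing (ℂ × ℂ × (Fin m → ℂ)) :=
  { (inferInstance : AddCommGroup (ℂ × ℂ × (Fin m → ℂ))) with
    bracket := fun x y => (0, x.1 * y.2.1 - y.1 * x.2.1, 0)
    add_lie := by intro x y z; simp [Prod.ext_iff]; ring
    lie_add := by intro x y z; simp [Prod.ext_iff]; ring
    lie_self := by intro x; simp [Prod.ext_iff]
    leibniz_lie := by intro x y z; simp [Prod.ext_iff]; ring }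

noncomputable instance b2aLieAlgebra (m : ℕ) : LieAlgebra ℂ (ℂ × ℂ × (Fin m → ℂ)) :=
  { lie_smul := by intro t x y; simp [Bracket.bracket, Prod.ext_iff]; ring }

noncomputable instance heisALieRing (n m : ℕ) :
    LieRing ((Fin n → ℂ) × (Fin n → ℂ) × ℂ × (Fin m → ℂ)) :=
  { (inferInstance : AddCommGroup ((Fin n → ℂ) × (Fin n → ℂ) × ℂ × (Fin m → ℂ))) with
    bracket := fun x y => (0, 0, ∑ i, (x.1 i * y.2.1 i - y.1 i * x.2.1 i), 0)
    add_lie := by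
      intro x y z
      simp [Prod.ext_iff, add_mul, mul_add, Finset.sum_add_distrib]
      ring
    lie_add := by
      intro x y z
      simp [Prod.ext_iff, add_mul, mul_add, Finset.sum_add_distrib]
      ring
    lie_self := by intro x; simp [Prod.ext_iff]
    leibniz_lie := by intro x y z; simp [Prod.ext_iff] }

noncomputable instance heisALieAlgebra (n m : ℕ) :
    LieAlgebra ℂ ((Fin n → ℂ) × (Fin n → ℂ) × ℂ × (Fin m → ℂ)) :=
  { lie_smul := by
      intro t x y
      simp [Bracket.bracket, Prod.ext_iff, Finset.mul_sum, mul_sub,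
        mul_comm, mul_left_comm, mul_assoc] }


open Module

lemma darboux : ∀ (k : ℕ) (V : Type u_1) [AddCommGroup V] [Module ℂ V] [FiniteDimensional ℂ V]
    (B : LinearMap.BilinForm ℂ V), B.IsAlt → B.Nondegenerate → finrank ℂ V = k →
    ∃ n : ℕ, ∃ e : V ≃ₗ[ℂ] (Fin n → ℂ) × (Fin n → ℂ),
      ∀ x y, B x y = ∑ i, ((e x).1 i * (e y).2 i - (e y).1 i * (e x).2 i) := by
  intro k
  induction k using Nat.strong_induction_on with
  | _ k ih =>
  intro V _ _ _ B halt hnd hk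
  by_cases hV : ∀ x : V, x = 0
  · have hsub : Subsingleton V := ⟨fun a b => (hV a).trans (hV b).symm⟩
    have hfr : finrank ℂ V = finrank ℂ ((Fin 0 → ℂ) × (Fin 0 → ℂ)) := by
      simp [finrank_zero_of_subsingleton]
    exact ⟨0, LinearEquiv.ofFinrankEq _ _ hfr, fun x y => by
      rw [hV x, map_zero, LinearMap.zero_apply]; simp⟩
  push_neg at hV
  obtain ⟨p, hp⟩ := hV
  -- find q with B p q = 1
  have hex : ∃ q', B p q' ≠ 0 := by
    by_contra hc
    push_neg at hc
    exact hp (hnd.1 p (fun y => hc y))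
  obtain ⟨q', hq'⟩ := hex
  set q : V := (B p q')⁻¹ • q' with hqdef
  have hpq : B p q = 1 := by
    simp [hqdef, inv_mul_cancel₀ hq']
  have hpp : B p p = 0 := halt p
  have hqq : B q q = 0 := halt q
  have hqp : B q p = -1 := by
    have := LinearMap.IsAlt.neg halt p q
    rw [← this, hpq]
  -- the hyperbolic plane W = span {p, q}
  set W : Submodule ℂ V := Submodule.span ℂ {p, q} with hWdef
  have hpW : p ∈ W := Submodule.subset_span (by simp)
  have hqW : q ∈ W := Submodule.subset_span (by simp)
  have hrefl : B.IsRefl := LinearMap.IsAlt.isRefl halt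
  have hWval : ∀ a b : ℂ, B (a • p + b • q) q = a ∧ B p (a • p + b • q) = b := by
    intro a b
    constructor
    · simp [hpq, hqq, hqp]
    · simp [hpq, hpp]
  have hWnd : (B.restrict W).Nondegenerate := by
    refine (LinearMap.IsRefl.nondegenerate_iff_separatingLeft (B := B.restrict W)
      (fun x y hxy => hrefl _ _ hxy)).mpr ?_
    intro w hw
    obtain ⟨a, b, hab⟩ := Submodule.mem_span_pair.mp w.2
    have h1 : B (w : V) q = 0 := hw ⟨q, hqW⟩
    have h2 : B p (w : V) = 0 := by
      have := hw ⟨p, hpW⟩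
      have h3 : B (w : V) p = 0 := this
      have := hrefl _ _ h3
      exact this
    rw [← hab] at h1 h2
    rw [(hWval a b).1] at h1
    rw [(hWval a b).2] at h2
    apply Subtype.ext
    rw [← hab, h1, h2]
    simp
  have hcompl : IsCompl W (B.orthogonal W) :=
    LinearMap.BilinForm.isCompl_orthogonal_of_restrict_nondegenerate hrefl hWnd
  set O := B.orthogonal W with hOdef
  have hOmem : ∀ x ∈ O, ∀ w ∈ W, B w x = 0 := fun x hx w hw =>
    (LinearMap.BilinForm.mem_orthogonal_iff.mp hx) w hw
  have hOmem' : ∀ x ∈ O, ∀ w ∈ W, B x w = 0 := fun x hx w hw => hrefl _ _ (hOmem x hx w hw)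
  have hOnd : (B.restrict O).Nondegenerate := by
    refine (LinearMap.IsRefl.nondegenerate_iff_separatingLeft (B := B.restrict O)
      (fun x y hxy => hrefl _ _ hxy)).mpr ?_
    intro o ho
    have hzero : ∀ v : V, B (o : V) v = 0 := by
      intro v
      have hv : v ∈ W ⊔ O := by rw [hcompl.sup_eq_top]; trivial
      obtain ⟨w, hw, o', ho', hwo⟩ := Submodule.mem_sup.mp hv
      have hBow : B (o : V) w = 0 := hOmem' o o.2 w hw
      have hBoo : B (o : V) o' = 0 := ho ⟨o', ho'⟩
      rw [← hwo, map_add, hBow, hBoo, add_zero]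
    exact Subtype.ext (hnd.1 o hzero)
  have hOalt : (B.restrict O).IsAlt := fun o => halt o
  -- dimension count
  have hli : LinearIndependent ℂ ![p, q] := by
    rw [LinearIndependent.pair_iff]
    intro s t hst
    have h1 := congrArg (fun v => B v q) hst
    have h2 := congrArg (fun v => B p v) hst
    rw [(hWval s t).1] at h1
    rw [(hWval s t).2] at h2
    simp at h1 h2
    exact ⟨h1, h2⟩
  have hWrank : finrank ℂ W = 2 := by
    have hr : W = Submodule.span ℂ (Set.range ![p, q]) := by
      rw [hWdef]
      congr 1
      simp [Matrix.range_cons, Matrix.range_empty, Set.pair_comm]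
    rw [hr, finrank_span_eq_card hli]
    simp
  have hsum : finrank ℂ W + finrank ℂ O = k := by
    rw [Submodule.finrank_add_eq_of_isCompl hcompl, hk]
  have hOlt : finrank ℂ O < k := by omega
  obtain ⟨n', eO, hEO⟩ := ih (finrank ℂ O) hOlt O (B.restrict O) hOalt hOnd rfl
  -- the equivalence W ≃ ℂ × ℂ
  let eWfun : W →ₗ[ℂ] ℂ × ℂ := LinearMap.prod ((B.flip q).comp W.subtype) ((B p).comp W.subtype)
  have heWfun : ∀ w : W, eWfun w = (B (w : V) q, B p (w : V)) := fun w => rfl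
  let eW : W ≃ₗ[ℂ] ℂ × ℂ :=
    { eWfun with
      invFun := fun ab => ⟨ab.1 • p + ab.2 • q,
        Submodule.add_mem _ (Submodule.smul_mem _ _ hpW) (Submodule.smul_mem _ _ hqW)⟩
      left_inv := by
        intro w
        obtain ⟨a, b, hab⟩ := Submodule.mem_span_pair.mp w.2
        apply Subtype.ext
        show (eWfun w).1 • p + (eWfun w).2 • q = (w : V)
        rw [heWfun, ← hab, (hWval a b).1, (hWval a b).2]
      right_inv := by
        intro ab
        show eWfun _ = ab
        rw [heWfun]
        exact Prod.ext (hWval ab.1 ab.2).1 (hWval ab.1 ab.2).2 }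
  have heW : ∀ w : W, eW w = (B (w : V) q, B p (w : V)) := fun w => rfl
  have hBW : ∀ w w' : W, B (w : V) (w' : V) = (eW w).1 * (eW w').2 - (eW w').1 * (eW w).2 := by
    intro w w'
    obtain ⟨a, b, hab⟩ := Submodule.mem_span_pair.mp w.2
    obtain ⟨a', b', hab'⟩ := Submodule.mem_span_pair.mp w'.2
    rw [heW, heW, ← hab, ← hab', (hWval a b).1, (hWval a' b').1, (hWval a b).2, (hWval a' b').2]
    simp [hpq, hpp, hqq, hqp]
    ring
  -- assemble
  let E : V ≃ₗ[ℂ] (Fin (n' + 1) → ℂ) × (Fin (n' + 1) → ℂ) :=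
    (Submodule.prodEquivOfIsCompl W O hcompl).symm ≪≫ₗ (eW.prodCongr eO) ≪≫ₗ
      { toFun := fun x => (Fin.cons x.1.1 x.2.1, Fin.cons x.1.2 x.2.2)
        map_add' := by
          intro x y
          refine Prod.ext (funext fun i => ?_) (funext fun i => ?_) <;>
            refine Fin.cases ?_ (fun j => ?_) i <;> simp
        map_smul' := by
          intro c x
          refine Prod.ext (funext fun i => ?_) (funext fun i => ?_) <;>
            refine Fin.cases ?_ (fun j => ?_) i <;> simp
        invFun := fun y => ((y.1 0, y.2 0), (Fin.tail y.1, Fin.tail y.2))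
        left_inv := by
          intro x
          simp [Fin.tail_cons]
        right_inv := by
          intro y
          simp [Fin.cons_self_tail] }
  refine ⟨n' + 1, E, ?_⟩
  intro x y
  set dx := (Submodule.prodEquivOfIsCompl W O hcompl).symm x with hdx
  set dy := (Submodule.prodEquivOfIsCompl W O hcompl).symm y with hdy
  have happly : ∀ v : V, ((Submodule.prodEquivOfIsCompl W O hcompl).symm v).1.val
      + ((Submodule.prodEquivOfIsCompl W O hcompl).symm v).2.val = v := by
    intro v
    have h1 := (Submodule.prodEquivOfIsCompl W O hcompl).apply_symm_apply v
    have h2 : (Submodule.prodEquivOfIsCompl W O hcompl)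
        ((Submodule.prodEquivOfIsCompl W O hcompl).symm v)
        = ((Submodule.prodEquivOfIsCompl W O hcompl).symm v).1.val
          + ((Submodule.prodEquivOfIsCompl W O hcompl).symm v).2.val := rfl
    rw [h1] at h2
    exact h2.symm
  have hx : x = (dx.1 : V) + (dx.2 : V) := (happly x).symm
  have hy : y = (dy.1 : V) + (dy.2 : V) := (happly y).symm
  have hEx : E x = (Fin.cons (eW dx.1).1 (eO dx.2).1, Fin.cons (eW dx.1).2 (eO dx.2).2) := rfl
  have hEy : E y = (Fin.cons (eW dy.1).1 (eO dy.2).1, Fin.cons (eW dy.1).2 (eO dy.2).2) := rfl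
  have e1 : B (dx.1 : V) (dy.2 : V) = 0 := hOmem _ dy.2.2 _ dx.1.2
  have e2 : B (dx.2 : V) (dy.1 : V) = 0 := hOmem' _ dx.2.2 _ dy.1.2
  have hBxy : B x y = B (dx.1 : V) (dy.1 : V) + B (dx.2 : V) (dy.2 : V) := by
    conv_lhs => rw [hx, hy]
    simp only [map_add, LinearMap.add_apply, e1, e2]
    ring
  have hrestr : B (dx.2 : V) (dy.2 : V) = (B.restrict O) dx.2 dy.2 := rfl
  rw [hEx, hEy, Fin.sum_univ_succ]
  simp only [Fin.cons_zero, Fin.cons_succ]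
  rw [hBxy, hBW dx.1 dy.1, hrestr, hEO dx.2 dy.2]


set_option maxHeartbeats 2000000 in
/-- A finite-dimensional complex Lie algebra whose derived algebra has dimension at
most one is abelian, or isomorphic to `b₂ ⊕ (abelian)`, or to `h_{2n+1} ⊕ (abelian)`. -/
theorem stmt6 (h : Type*) [LieRing h] [LieAlgebra ℂ h] [Module.Finite ℂ h]
    (hder : Module.finrank ℂ ↥(LieAlgebra.derivedSeries ℂ h 1) ≤ 1) :
    IsLieAbelian h ∨
      (∃ m : ℕ, Nonempty (h ≃ₗ⁅ℂ⁆ (ℂ × ℂ × (Fin m → ℂ)))) ∨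
      (∃ n m : ℕ, 1 ≤ n ∧
        Nonempty (h ≃ₗ⁅ℂ⁆ ((Fin n → ℂ) × (Fin n → ℂ) × ℂ × (Fin m → ℂ)))) := by
  classical
  by_cases hab : IsLieAbelian h
  · exact Or.inl hab
  right
  have hne : ∃ x y : h, ⁅x, y⁆ ≠ 0 := by
    by_contra hc
    push_neg at hc
    exact hab ⟨fun x y => hc x y⟩
  obtain ⟨x₀, y₀, hxy₀⟩ := hne
  set z : h := ⁅x₀, y₀⁆ with hzdef
  have hz : z ≠ 0 := hxy₀
  have hmemD : ∀ x y : h, ⁅x, y⁆ ∈ LieAlgebra.derivedSeries ℂ h 1 := by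
    intro x y
    have hder1 : LieAlgebra.derivedSeries ℂ h 1 = ⁅(⊤ : LieIdeal ℂ h), (⊤ : LieIdeal ℂ h)⁆ := by
      rw [LieAlgebra.derivedSeries_def, LieAlgebra.derivedSeriesOfIdeal_succ,
        LieAlgebra.derivedSeriesOfIdeal_zero]
    rw [hder1]
    exact LieSubmodule.lie_mem_lie (LieSubmodule.mem_top _) (LieSubmodule.mem_top _)
  have hspan : ∀ x y : h, ⁅x, y⁆ ∈ Submodule.span ℂ {z} := by
    have hle : Submodule.span ℂ {z} ≤ (LieAlgebra.derivedSeries ℂ h 1).toSubmodule := by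
      rw [Submodule.span_le, Set.singleton_subset_iff]
      exact hmemD x₀ y₀
    have hfr : Module.finrank ℂ ↥((LieAlgebra.derivedSeries ℂ h 1).toSubmodule) ≤
        Module.finrank ℂ ↥(Submodule.span ℂ {z}) := by
      rw [finrank_span_singleton hz]
      exact hder
    have heq := Submodule.eq_of_le_of_finrank_le hle hfr
    intro x y
    rw [heq]
    exact hmemD x y
  -- a linear functional with ξ z = 1
  obtain ⟨ξ, hξ⟩ := LinearMap.exists_leftInverse_of_injective
    (LinearMap.toSpanSingleton ℂ h z) (LinearMap.ker_toSpanSingleton ℂ hz)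
  have hξz : ξ z = 1 := by
    have := congrFun (congrArg DFunLike.coe hξ) (1 : ℂ)
    simpa using this
  -- the bilinear form
  set B : h →ₗ[ℂ] h →ₗ[ℂ] ℂ :=
    { toFun := fun x => ξ ∘ₗ LieAlgebra.ad ℂ h x
      map_add' := by intro a b; ext v; simp [LieAlgebra.ad_apply, add_lie]
      map_smul' := by intro c a; ext v; simp [LieAlgebra.ad_apply, smul_lie] } with hBdef
  have hBapply : ∀ x y : h, B x y = ξ ⁅x, y⁆ := fun x y => rfl
  have hBz : ∀ x y : h, ⁅x, y⁆ = B x y • z := by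
    intro x y
    obtain ⟨c, hc⟩ := Submodule.mem_span_singleton.mp (hspan x y)
    rw [hBapply, ← hc, map_smul, hξz, smul_eq_mul, mul_one]
  have halt : B.IsAlt := by
    intro x
    rw [hBapply, lie_self, map_zero]
  have hskew : ∀ x y : h, B y x = -B x y := by
    intro x y
    have := LinearMap.IsAlt.neg halt x y
    rw [← this]
  have hsmulinj : Function.Injective fun c : ℂ => c • z := smul_left_injective ℂ hz
  have hJ : ∀ x y w : h, B y w * B x z = B x y * B z w + B x w * B y z := by
    intro x y w
    have hl := leibniz_lie x y w
    rw [hBz y w, lie_smul, hBz x z, hBz x y, smul_lie, hBz z w, hBz x w, lie_smul, hBz y z,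
      smul_smul, smul_smul, smul_smul, ← add_smul] at hl
    exact hsmulinj hl
  by_cases hφ : ∀ x : h, B x z = 0
  · -- Heisenberg case
    right
    set R : Submodule ℂ h := LinearMap.ker B with hRdef
    have hRap : ∀ r ∈ R, ∀ v : h, B r v = 0 := by
      intro r hr v
      have hk : B r = 0 := LinearMap.mem_ker.mp hr
      rw [hk, LinearMap.zero_apply]
    have hRap' : ∀ r ∈ R, ∀ v : h, B v r = 0 := by
      intro r hr v
      rw [hskew r v, hRap r hr v, neg_zero]
    have hzR : z ∈ R := by
      rw [hRdef, LinearMap.mem_ker]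
      ext v
      rw [LinearMap.zero_apply, hskew v z, hφ v, neg_zero]
    obtain ⟨C, hC⟩ := Submodule.exists_isCompl R
    have hCnd : (LinearMap.BilinForm.restrict B C).Nondegenerate := by
      refine (LinearMap.IsRefl.nondegenerate_iff_separatingLeft
        (B := LinearMap.BilinForm.restrict B C)
        (fun x y hxy => (LinearMap.IsAlt.isRefl halt) _ _ hxy)).mpr ?_
      intro c hc
      have hzero : ∀ v : h, B c.val v = 0 := by
        intro v
        have hv : v ∈ R ⊔ C := by rw [hC.sup_eq_top]; trivial
        obtain ⟨r, hr, c', hc', hrc⟩ := Submodule.mem_sup.mp hv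
        have h1 : B c.val r = 0 := hRap' r hr c.val
        have h2 : B c.val c' = 0 := hc ⟨c', hc'⟩
        rw [← hrc, map_add, h1, h2, add_zero]
      have hcR : c.val ∈ R := by
        rw [hRdef, LinearMap.mem_ker]
        ext v
        rw [LinearMap.zero_apply]
        exact hzero v
      have hbot : c.val ∈ (⊥ : Submodule ℂ h) := by
        rw [← hC.inf_eq_bot]
        exact Submodule.mem_inf.mpr ⟨hcR, c.2⟩
      exact Subtype.ext ((Submodule.mem_bot ℂ).mp hbot)
    have hCalt : (LinearMap.BilinForm.restrict B C).IsAlt := fun c => halt c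
    obtain ⟨n, eC, hEC⟩ := darboux (finrank ℂ C) C (LinearMap.BilinForm.restrict B C) hCalt hCnd rfl
    have hCR : IsCompl C R := hC.symm
    set dec : h →ₗ[ℂ] C × R := ((Submodule.prodEquivOfIsCompl C R hCR).symm : h →ₗ[ℂ] C × R)
      with hdecdef
    have hdecap : ∀ v : h, dec v = (Submodule.prodEquivOfIsCompl C R hCR).symm v :=
      fun v => rfl
    have happly : ∀ v : h, ((dec v).1 : h) + ((dec v).2 : h) = v := by
      intro v
      have h1 := (Submodule.prodEquivOfIsCompl C R hCR).apply_symm_apply v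
      have h2 : (Submodule.prodEquivOfIsCompl C R hCR)
          ((Submodule.prodEquivOfIsCompl C R hCR).symm v)
          = (((Submodule.prodEquivOfIsCompl C R hCR).symm v).1 : h)
            + (((Submodule.prodEquivOfIsCompl C R hCR).symm v).2 : h) := rfl
      rw [h1] at h2
      rw [hdecap]
      exact h2.symm
    have hBdec : ∀ x y : h, B x y = (LinearMap.BilinForm.restrict B C) (dec x).1 (dec y).1 := by
      intro x y
      have hrestr : (LinearMap.BilinForm.restrict B C) (dec x).1 (dec y).1 = B ((dec x).1 : h) ((dec y).1 : h) := rfl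
      rw [hrestr]
      conv_lhs => rw [← happly x, ← happly y]
      have e1 : B ((dec x).1 : h) ((dec y).2 : h) = 0 := hRap' _ (dec y).2.2 _
      have e2 : B ((dec x).2 : h) ((dec y).1 : h) = 0 := hRap _ (dec x).2.2 _
      have e3 : B ((dec x).2 : h) ((dec y).2 : h) = 0 := hRap _ (dec x).2.2 _
      simp only [map_add, LinearMap.add_apply, e1, e2, e3]
      ring
    have hn : 1 ≤ n := by
      by_contra hn0
      push_neg at hn0
      have hn0' : n = 0 := by omega
      subst hn0'
      have h0 : B x₀ y₀ = 0 := by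
        rw [hBdec, hEC]
        simp
      exact hz (by rw [hzdef, hBz x₀ y₀, h0, zero_smul])
    set zR : R := ⟨z, hzR⟩ with hzRdef
    have hzR' : zR ≠ 0 := by
      intro hc
      exact hz (congrArg Subtype.val hc)
    obtain ⟨ξ', hξ'⟩ := LinearMap.exists_leftInverse_of_injective
      (LinearMap.toSpanSingleton ℂ R zR) (LinearMap.ker_toSpanSingleton ℂ hzR')
    have hξ'z : ξ' zR = 1 := by
      have := congrFun (congrArg DFunLike.coe hξ') (1 : ℂ)
      simpa using this
    set N : Submodule ℂ R := LinearMap.ker ξ' with hNdef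
    set κ : N ≃ₗ[ℂ] (Fin (finrank ℂ N) → ℂ) := (Module.finBasis ℂ N).equivFun with hκdef
    set Q : R →ₗ[ℂ] R := LinearMap.id - ξ'.smulRight zR with hQdef
    have hQap : ∀ r, Q r = r - ξ' r • zR := fun r => rfl
    have hQN : ∀ r, Q r ∈ N := by
      intro r
      rw [hNdef, LinearMap.mem_ker, hQap]
      simp [hξ'z]
    have hNker : ∀ u : N, ξ' u.val = 0 := fun u => LinearMap.mem_ker.mp u.2
    set eR : R ≃ₗ[ℂ] ℂ × (Fin (finrank ℂ N) → ℂ) :=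
      { toLinearMap := LinearMap.prod ξ' (κ.toLinearMap ∘ₗ Q.codRestrict N hQN)
        invFun := fun t => t.1 • zR + (κ.symm t.2).val
        left_inv := by
          intro r
          show ξ' r • zR + (κ.symm (κ (Q.codRestrict N hQN r))).val = r
          rw [LinearEquiv.symm_apply_apply]
          show ξ' r • zR + Q r = r
          rw [hQap]
          abel
        right_inv := by
          intro t
          obtain ⟨a, u⟩ := t
          have h1 := hNker (κ.symm u)
          have hξv : ξ' (a • zR + (κ.symm u).val) = a := by
            simp [hξ'z, h1]
          show (ξ' _, κ (Q.codRestrict N hQN _)) = (a, u)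
          refine Prod.ext hξv ?_
          have hres : Q.codRestrict N hQN (a • zR + (κ.symm u).val) = κ.symm u := by
            apply Subtype.ext
            show Q _ = ((κ.symm u : N) : R)
            rw [hQap, hξv]
            abel
          show κ (Q.codRestrict N hQN _) = u
          rw [hres, LinearEquiv.apply_symm_apply] } with heRdef
    have heRz : eR zR = (1, 0) := by
      have hQz : Q.codRestrict N hQN zR = 0 := by
        apply Subtype.ext
        show Q zR = 0
        rw [hQap, hξ'z, one_smul, sub_self]
      show (ξ' zR, κ (Q.codRestrict N hQN zR)) = (1, 0)
      rw [hξ'z, hQz, map_zero]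
    set E : h ≃ₗ[ℂ] (Fin n → ℂ) × (Fin n → ℂ) × ℂ × (Fin (finrank ℂ N) → ℂ) :=
      (Submodule.prodEquivOfIsCompl C R hCR).symm ≪≫ₗ (eC.prodCongr eR) ≪≫ₗ
        LinearEquiv.prodAssoc ℂ _ _ _ with hEdef
    have hdecz : (Submodule.prodEquivOfIsCompl C R hCR).symm z = (0, zR) := by
      apply (LinearEquiv.symm_apply_eq _).mpr
      have hap : (Submodule.prodEquivOfIsCompl C R hCR) (0, zR)
          = ((0 : C) : h) + (zR : h) := rfl
      rw [hap]
      simp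
      rfl
    have hEz : E z = (0, 0, 1, 0) := by
      have h1 : E z = LinearEquiv.prodAssoc ℂ _ _ _
          ((eC ((Submodule.prodEquivOfIsCompl C R hCR).symm z).1,
            eR ((Submodule.prodEquivOfIsCompl C R hCR).symm z).2)) := rfl
      rw [h1, hdecz]
      show ((eC 0).1, (eC 0).2, eR zR) = (0, 0, 1, 0)
      rw [heRz, map_zero]
      rfl
    refine ⟨n, finrank ℂ N, hn, ⟨{ E with map_lie' := ?_ }⟩⟩
    intro x y
    show E ⁅x, y⁆ = ⁅E x, E y⁆
    have hbr : ⁅E x, E y⁆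
        = ((0 : Fin n → ℂ), (0 : Fin n → ℂ),
          ∑ i, ((E x).1 i * (E y).2.1 i - (E y).1 i * (E x).2.1 i), (0 : Fin (finrank ℂ N) → ℂ))
        := rfl
    have hEx1 : (E x).1 = (eC (dec x).1).1 := rfl
    have hEx2 : (E x).2.1 = (eC (dec x).1).2 := rfl
    have hEy1 : (E y).1 = (eC (dec y).1).1 := rfl
    have hEy2 : (E y).2.1 = (eC (dec y).1).2 := rfl
    have hsum : ∑ i, ((E x).1 i * (E y).2.1 i - (E y).1 i * (E x).2.1 i) = B x y := by
      rw [hEx1, hEx2, hEy1, hEy2, ← hEC (dec x).1 (dec y).1, ← hBdec]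
    rw [hBz x y, map_smul, hEz, hbr, hsum]
    refine Prod.ext ?_ (Prod.ext ?_ (Prod.ext ?_ ?_)) <;> simp
  · -- b₂ case
    left
    push_neg at hφ
    obtain ⟨e₀, he₀⟩ := hφ
    set e : h := (B e₀ z)⁻¹ • e₀ with hedef
    have hez : B e z = 1 := by
      rw [hedef, map_smul]
      simp [inv_mul_cancel₀ he₀]
    set φ : h →ₗ[ℂ] ℂ := B.flip z with hφdef
    set ψ : h →ₗ[ℂ] ℂ := B e with hψdef
    have hφap : ∀ x, φ x = B x z := fun x => rfl
    have hψap : ∀ x, ψ x = B e x := fun x => rfl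
    have hφe : φ e = 1 := hez
    have hψe : ψ e = 0 := halt e
    have hφz : φ z = 0 := halt z
    have hψz : ψ z = 1 := hez
    have hkey : ∀ x y, B x y = φ x * ψ y - φ y * ψ x := by
      intro x y
      have hJ' := hJ e x y
      rw [hez, mul_one] at hJ'
      rw [hJ', hφap, hφap, hψap, hψap, hskew y z]
      ring
    set P : h →ₗ[ℂ] h := LinearMap.id - φ.smulRight e - ψ.smulRight z with hPdef
    have hPap : ∀ x, P x = x - φ x • e - ψ x • z := fun x => rfl
    set N : Submodule ℂ h := LinearMap.ker φ ⊓ LinearMap.ker ψ with hNdef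
    have hPN : ∀ x, P x ∈ N := by
      intro x
      rw [hNdef, Submodule.mem_inf, LinearMap.mem_ker, LinearMap.mem_ker, hPap]
      constructor
      · simp [hφe, hφz]
      · simp [hψe, hψz]
    set κ : N ≃ₗ[ℂ] (Fin (finrank ℂ N) → ℂ) := (Module.finBasis ℂ N).equivFun with hκdef
    have hNker : ∀ u : N, φ u.val = 0 ∧ ψ u.val = 0 := fun u =>
      ⟨(Submodule.mem_inf.mp u.2).1, (Submodule.mem_inf.mp u.2).2⟩
    set E : h ≃ₗ[ℂ] ℂ × ℂ × (Fin (finrank ℂ N) → ℂ) :=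
      { toLinearMap := LinearMap.prod φ (LinearMap.prod ψ (κ.toLinearMap ∘ₗ P.codRestrict N hPN))
        invFun := fun t => t.1 • e + t.2.1 • z + (κ.symm t.2.2).val
        left_inv := by
          intro x
          show φ x • e + ψ x • z + (κ.symm (κ (P.codRestrict N hPN x))).val = x
          rw [LinearEquiv.symm_apply_apply]
          show φ x • e + ψ x • z + P x = x
          rw [hPap]
          abel
        right_inv := by
          intro t
          obtain ⟨a, b, u⟩ := t
          have h1 := hNker (κ.symm u)
          have hφv : φ (a • e + b • z + (κ.symm u).val) = a := by
            simp [hφe, hφz, h1.1]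
          have hψv : ψ (a • e + b • z + (κ.symm u).val) = b := by
            simp [hψe, hψz, h1.2]
          show (φ _, ψ _, κ (P.codRestrict N hPN _)) = (a, b, u)
          refine Prod.ext hφv (Prod.ext hψv ?_)
          have hres : P.codRestrict N hPN (a • e + b • z + (κ.symm u).val) = κ.symm u := by
            apply Subtype.ext
            show P _ = ((κ.symm u : N) : h)
            rw [hPap, hφv, hψv]
            abel
          show κ (P.codRestrict N hPN _) = u
          rw [hres, LinearEquiv.apply_symm_apply] } with hEdef
    have hEz : E z = (0, 1, 0) := by
      have hPz : P.codRestrict N hPN z = 0 := by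
        apply Subtype.ext
        show P z = 0
        rw [hPap, hφz, hψz]
        simp
      show (φ z, ψ z, κ (P.codRestrict N hPN z)) = (0, 1, 0)
      rw [hφz, hψz, hPz, map_zero]
    refine ⟨finrank ℂ N, ⟨{ E with map_lie' := ?_ }⟩⟩
    intro x y
    show E ⁅x, y⁆ = ⁅E x, E y⁆
    have hbr : ⁅E x, E y⁆ = (0, φ x * ψ y - φ y * ψ x, 0) := rfl
    rw [hBz x y, map_smul, hEz, hbr, ← hkey x y]
    refine Prod.ext ?_ (Prod.ext ?_ ?_) <;> simp
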